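/- (Power series identity) For any policy π, κ ∈ [0,1], γ ∈ (0,1), and integer i ≥ 1: (ξ_κ D^π_κ P^π)^i = Σ_{t=i-1}^∞ binom(t, i-1) γ^{t+1} (1-κ)^i κ^{t-(i-1)} (P^π)^{t+1}, where ξ_κ = γ(1-κ)/(1-γκ) and D^π_κ = (1-κγ)(I-κγP^π)^{-1}. -/

import Mathlib

def IsStochastic {n : ℕ} (P : Matrix (Fin n) (Fin n) ℝ) : Prop :=
  (∀ i j, 0 ≤ P i j) ∧ ∀ i, ∑ j, P i j = 1

attribute [local instance] Matrix.linftyOpNormedRing Matrix.linftyOpNormedAlgebra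

/-- Power series identity: for `i ≥ 1`,
`(ξ_κ D^π_κ P^π)^i = Σ_{t=i-1}^∞ binom(t, i-1) γ^{t+1} (1-κ)^i κ^{t-(i-1)} (P^π)^{t+1}`
(reindexed with `t = j + i - 1`). -/
theorem stmt13 {n : ℕ} (γ κ : ℝ) (hγ : γ ∈ Set.Ioo (0:ℝ) 1) (hκ : κ ∈ Set.Icc (0:ℝ) 1)
    (P : Matrix (Fin n) (Fin n) ℝ) (hP : IsStochastic P) (i : ℕ) (hi : 1 ≤ i) :
    let ξ : ℝ := γ * (1-κ) / (1 - γ*κ)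
    let D : Matrix (Fin n) (Fin n) ℝ := (1 - κ*γ) • (1 - (κ*γ) • P)⁻¹
    (ξ • (D * P))^i
      = ∑' j : ℕ,
          (((j + i - 1).choose (i-1) : ℝ) * γ^(j+i) * (1-κ)^i * κ^j) • P^(j+i) := by
  intro ξ D
  obtain ⟨hγ0, hγ1⟩ := hγ
  obtain ⟨hκ0, hκ1⟩ := hκ
  have hq0 : (0:ℝ) ≤ κ * γ := mul_nonneg hκ0 hγ0.le
  have hq1 : κ * γ < 1 := by nlinarith
  set x : Matrix (Fin n) (Fin n) ℝ := (κ*γ) • P with hxdef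
  -- norm bound
  have hPn : ‖P‖ ≤ 1 := by
    rw [Matrix.linfty_opNorm_def]
    have key : ∀ a : Fin n, (∑ j, ‖P a j‖₊ : NNReal) = 1 := by
      intro a
      have h1 : ((∑ j, ‖P a j‖₊ : NNReal) : ℝ) = 1 := by
        push_cast
        calc ∑ j, ‖P a j‖ = ∑ j, P a j :=
              Finset.sum_congr rfl fun j _ => by
                rw [Real.norm_eq_abs, abs_of_nonneg (hP.1 a j)]
          _ = 1 := hP.2 a
      exact NNReal.coe_injective (by simpa using h1)
    have : ((Finset.univ : Finset (Fin n)).sup fun a => ∑ j, ‖P a j‖₊) ≤ (1 : NNReal) :=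
      Finset.sup_le fun a _ => le_of_eq (key a)
    exact_mod_cast this
  have hx : ‖x‖ < 1 := by
    rw [hxdef, norm_smul, Real.norm_eq_abs, abs_of_nonneg hq0]
    calc (κ*γ) * ‖P‖ ≤ (κ*γ) * 1 := mul_le_mul_of_nonneg_left hPn hq0
      _ < 1 := by linarith
  have hinv : (1 - x)⁻¹ = Ring.inverse (1 - x) :=
    Matrix.inv_eq_right_inv (Ring.mul_inverse_cancel _ (isUnit_one_sub_of_norm_lt_one hx))
  -- commutation
  have hcomm : Commute (Ring.inverse (1 - x)) P := by
    rw [← geom_series_eq_inverse x hx]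
    have hsummable : Summable fun t : ℕ => x ^ t :=
      (summable_geometric_of_norm_lt_one hx)
    unfold Commute SemiconjBy
    exact (hsummable.tsum_mul_right P).symm.trans ((tsum_congr fun t => by
      have : Commute x P := (Commute.refl P).smul_left _
      exact (this.pow_left t).eq).trans (hsummable.tsum_mul_left P))
  -- the binomial series
  have hsum := hasSum_choose_mul_geometric_of_norm_lt_one' (i-1) hx
  rw [Nat.sub_add_cancel hi] at hsum
  have hS : Summable fun j : ℕ => ((j + (i-1)).choose (i-1) : Matrix (Fin n) (Fin n) ℝ) * x ^ j :=
    hsum.summable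
  have hne : (1 : ℝ) - γ*κ ≠ 0 := by
    have : γ * κ < 1 := by rw [mul_comm]; exact hq1
    linarith
  have hD : ξ • (D * P) = (γ*(1-κ)) • (Ring.inverse (1 - x) * P) := by
    show (γ * (1-κ) / (1 - γ*κ)) • (((1 - κ*γ) • (1 - x)⁻¹) * P) = _
    rw [Matrix.smul_mul, smul_smul, hinv]
    congr 1
    rw [mul_comm κ γ, div_mul_cancel₀ _ hne]
  calc (ξ • (D * P))^i
      = ((γ*(1-κ)) • (Ring.inverse (1 - x) * P))^i := by rw [hD]
    _ = (γ*(1-κ))^i • (Ring.inverse (1 - x)^i * P^i) := by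
        rw [smul_pow, hcomm.mul_pow]
    _ = (γ*(1-κ))^i • ((∑' j : ℕ, ((j + (i-1)).choose (i-1) : Matrix (Fin n) (Fin n) ℝ) * x ^ j) * P^i) := by
        exact congrArg (fun M => (γ*(1-κ))^i • (M * P^i)) hsum.tsum_eq.symm
    _ = ∑' j : ℕ, (γ*(1-κ))^i • (((j + (i-1)).choose (i-1) : Matrix (Fin n) (Fin n) ℝ) * x ^ j * P^i) := by
        rw [← hS.tsum_mul_right, Summable.tsum_const_smul _ (hS.mul_right _)]
    _ = ∑' j : ℕ,
          (((j + i - 1).choose (i-1) : ℝ) * γ^(j+i) * (1-κ)^i * κ^j) • P^(j+i) := by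
        refine tsum_congr fun j => ?_
        have hC : j + i - 1 = j + (i-1) := by omega
        rw [hC, hxdef, smul_pow, ← nsmul_eq_mul, ← Nat.cast_smul_eq_nsmul ℝ,
          smul_mul_assoc, smul_mul_assoc, ← pow_add, smul_smul, smul_smul]
        congr 1
        rw [mul_pow, pow_add]
        ring
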